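/- Let (a_1,...,a_s) and (b_1,...,b_s) be weakly increasing tuples of nonnegative integers with the same total sum, satisfying Σ_{j≤i} a_j ≤ Σ_{j≤i} b_j for all 1 ≤ i ≤ s, with strict inequality for some i < s. Then for any nonnegative integer c, the sorted (s+1)-tuples obtained by inserting c satisfy r_i(a_1,...,a_s,c) ≤ r_i(b_1,...,b_s,c) for all 1 ≤ i ≤ s+1, i.e., the sum of the i smallest entries of (a_1,...,a_s,c) is at most the sum of the i smallest entries of (b_1,...,b_s,c), with strict inequality for some i < s+1. -/

import Mathlib

open Finset

/-- Sum of the `ℓ` smallest entries: minimum over `ℓ`-element subsets of the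
sum of the selected entries. -/
noncomputable def rmin {m : ℕ} (a : Fin m → ℕ) (ℓ : ℕ) : ℕ :=
  sInf {x : ℕ | ∃ S : Finset (Fin m), S.card = ℓ ∧ x = ∑ i ∈ S, a i}

def Psum {m : ℕ} (a : Fin m → ℕ) (ℓ : ℕ) : ℕ :=
  ∑ j ∈ Finset.univ.filter (fun j : Fin m => (j : ℕ) < ℓ), a j

lemma filter_lt_succ (m ℓ : ℕ) (h : ℓ < m) :
    (Finset.univ.filter fun j : Fin m => (j:ℕ) < ℓ+1)
      = insert ⟨ℓ,h⟩ (Finset.univ.filter fun j : Fin m => (j:ℕ) < ℓ) := by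
  ext j
  simp [Fin.ext_iff]
  omega

lemma card_filter_lt {m ℓ : ℕ} (h : ℓ ≤ m) :
    (Finset.univ.filter fun j : Fin m => (j:ℕ) < ℓ).card = ℓ := by
  induction ℓ with
  | zero => simp
  | succ ℓ ih =>
    rw [filter_lt_succ m ℓ h, Finset.card_insert_of_notMem (by simp), ih (by omega)]

lemma Psum_succ {m : ℕ} (a : Fin m → ℕ) {ℓ : ℕ} (h : ℓ < m) :
    Psum a (ℓ+1) = Psum a ℓ + a ⟨ℓ, h⟩ := by
  rw [Psum, Psum, filter_lt_succ m ℓ h, Finset.sum_insert (by simp)]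
  ring

lemma Psum_all {m : ℕ} (a : Fin m → ℕ) : Psum a m = ∑ i, a i := by
  rw [Psum]
  congr 1
  apply Finset.filter_true_of_mem
  intro j _
  exact j.isLt

lemma strictMono_nat_le {n : ℕ} {f : Fin n → ℕ} (hf : StrictMono f) (k : Fin n) :
    (k : ℕ) ≤ f k := by
  rcases n with _ | n
  · exact k.elim0
  induction k using Fin.induction with
  | zero => exact Nat.zero_le _
  | succ i ih =>
    have h1 := hf (Fin.castSucc_lt_succ : Fin.castSucc i < i.succ)
    have h2 := ih
    simp [Fin.lt_def, Fin.coe_castSucc, Fin.val_succ] at h1 h2 ⊢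
    omega

lemma lowerBound {m : ℕ} {a : Fin m → ℕ} (hma : Monotone a) (S : Finset (Fin m)) :
    Psum a S.card ≤ ∑ i ∈ S, a i := by
  set k := S.card with hk
  have hkm : k ≤ m := by simpa using S.card_le_univ
  have e := S.orderIsoOfFin hk.symm
  have hg : StrictMono (fun j : Fin k => ((e j : Fin m) : ℕ)) := by
    intro x y hxy
    exact e.strictMono hxy
  -- sum over S = sum over Fin k
  have h1 : ∑ i ∈ S, a i = ∑ j : Fin k, a (e j) := by
    rw [← Finset.sum_coe_sort S a]
    exact (Equiv.sum_comp e.toEquiv (fun x => a x)).symm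
  have hfilt : (Finset.univ.filter fun j : Fin m => (j:ℕ) < k)
      = Finset.map (Fin.castLEOrderEmb hkm).toEmbedding Finset.univ := by
    ext j
    simp only [Finset.mem_filter, Finset.mem_univ, true_and, Finset.mem_map]
    constructor
    · intro hj
      exact ⟨⟨(j:ℕ), hj⟩, Fin.ext rfl⟩
    · rintro ⟨x, rfl⟩
      exact x.isLt
  have h2 : Psum a k = ∑ j : Fin k, a (Fin.castLE hkm j) := by
    rw [Psum, hfilt, Finset.sum_map]
    rfl
  rw [h1, h2]
  apply Finset.sum_le_sum
  intro j _
  apply hma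
  have := strictMono_nat_le hg j
  exact this

lemma card_image_castSucc {m : ℕ} (T : Finset (Fin m)) :
    (T.image Fin.castSucc).card = T.card :=
  Finset.card_image_of_injective _ (Fin.castSucc_injective m)

lemma sum_image_castSucc {m : ℕ} (a : Fin m → ℕ) (c : ℕ) (T : Finset (Fin m)) :
    ∑ i ∈ T.image Fin.castSucc, Fin.snoc a c i = ∑ i ∈ T, a i := by
  rw [Finset.sum_image (by intro x _ y _ h; exact Fin.castSucc_injective m h)]
  simp [Fin.snoc_castSucc]

lemma last_not_mem_image {m : ℕ} (T : Finset (Fin m)) :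
    Fin.last m ∉ T.image Fin.castSucc := by
  simp only [Finset.mem_image, not_exists, not_and]
  intro x _
  exact (Fin.castSucc_lt_last x).ne

lemma snoc_notlast_exists {m : ℕ} (a : Fin m → ℕ) (c : ℕ) (S : Finset (Fin (m+1)))
    (h : Fin.last m ∉ S) :
    ∃ T : Finset (Fin m), T.card = S.card ∧ ∑ i ∈ S, Fin.snoc a c i = ∑ i ∈ T, a i := by
  have hsub : S ⊆ Finset.univ.image Fin.castSucc := by
    intro j hj
    have hj' : j ≠ Fin.last m := fun hh => h (hh ▸ hj)
    rcases Fin.exists_castSucc_eq.2 hj' with ⟨i, rfl⟩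
    exact Finset.mem_image.mpr ⟨i, Finset.mem_univ i, rfl⟩
  rcases Finset.subset_image_iff.mp hsub with ⟨T, -, hT⟩
  refine ⟨T, by rw [← hT, card_image_castSucc], by rw [← hT, sum_image_castSucc]⟩

lemma rmin_set_mem {m : ℕ} (a : Fin m → ℕ) {ℓ : ℕ} (h : ℓ ≤ m) :
    ∃ S : Finset (Fin m), S.card = ℓ ∧ rmin a ℓ = ∑ i ∈ S, a i := by
  have hne : {x : ℕ | ∃ S : Finset (Fin m), S.card = ℓ ∧ x = ∑ i ∈ S, a i}.Nonempty := by
    obtain ⟨S, -, hS⟩ := Finset.exists_subset_card_eq (s := (Finset.univ : Finset (Fin m))) (n := ℓ) (by simpa)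
    exact ⟨∑ i ∈ S, a i, S, hS, rfl⟩
  exact Nat.sInf_mem hne

lemma rmin_le {m : ℕ} (a : Fin m → ℕ) {ℓ : ℕ} (S : Finset (Fin m)) (hS : S.card = ℓ) :
    rmin a ℓ ≤ ∑ i ∈ S, a i :=
  Nat.sInf_le ⟨S, hS, rfl⟩

lemma rmin_mono_eq {m : ℕ} {a : Fin m → ℕ} (hma : Monotone a) {ℓ : ℕ} (h : ℓ ≤ m) :
    rmin a ℓ = Psum a ℓ := by
  apply le_antisymm
  · exact rmin_le a _ (card_filter_lt h)
  · obtain ⟨S, hcard, heq⟩ := rmin_set_mem a h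
    rw [heq, ← hcard]
    exact lowerBound hma S

lemma rmin_snoc {m : ℕ} {a : Fin m → ℕ} (hma : Monotone a) (c : ℕ) {ℓ : ℕ}
    (h1 : 1 ≤ ℓ) (h2 : ℓ ≤ m) :
    rmin (Fin.snoc a c) ℓ = min (Psum a ℓ) (Psum a (ℓ-1) + c) := by
  apply le_antisymm
  · apply le_min
    · -- subset avoiding last
      have : rmin (Fin.snoc a c) ℓ ≤
          ∑ i ∈ (Finset.univ.filter fun j : Fin m => (j:ℕ) < ℓ).image Fin.castSucc,
            Fin.snoc a c i :=
        rmin_le _ _ (by rw [card_image_castSucc, card_filter_lt h2])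
      rwa [sum_image_castSucc] at this
    · have hnm := last_not_mem_image (Finset.univ.filter fun j : Fin m => (j:ℕ) < ℓ-1)
      have : rmin (Fin.snoc a c) ℓ ≤
          ∑ i ∈ insert (Fin.last m)
            ((Finset.univ.filter fun j : Fin m => (j:ℕ) < ℓ-1).image Fin.castSucc),
            Fin.snoc a c i := by
        apply rmin_le
        rw [Finset.card_insert_of_notMem hnm, card_image_castSucc,
          card_filter_lt (by omega)]
        omega
      rw [Finset.sum_insert hnm, Fin.snoc_last, sum_image_castSucc] at this
      rw [Psum]
      omega
  · obtain ⟨S, hcard, heq⟩ := rmin_set_mem (Fin.snoc a c) (by omega : ℓ ≤ m + 1)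
    rw [heq]
    by_cases hl : Fin.last m ∈ S
    · have herase : Fin.last m ∉ S.erase (Fin.last m) := Finset.notMem_erase _ _
      obtain ⟨T, hTcard, hTsum⟩ := snoc_notlast_exists a c _ herase
      have hc : T.card = ℓ - 1 := by rw [hTcard, Finset.card_erase_of_mem hl, hcard]
      have hsplit : ∑ i ∈ S, Fin.snoc a c i
          = c + ∑ i ∈ S.erase (Fin.last m), Fin.snoc a c i := by
        rw [← Finset.add_sum_erase _ _ hl, Fin.snoc_last]
      rw [hsplit, hTsum]
      calc min (Psum a ℓ) (Psum a (ℓ-1) + c) ≤ Psum a (ℓ-1) + c := min_le_right _ _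
        _ ≤ (∑ i ∈ T, a i) + c := by
            have := lowerBound hma T
            rw [hc] at this
            omega
        _ = c + ∑ i ∈ T, a i := by ring
    · obtain ⟨T, hTcard, hTsum⟩ := snoc_notlast_exists a c S hl
      rw [hTsum]
      calc min (Psum a ℓ) (Psum a (ℓ-1) + c) ≤ Psum a ℓ := min_le_left _ _
        _ ≤ ∑ i ∈ T, a i := by
            have := lowerBound hma T
            rwa [hTcard, hcard] at this

lemma rmin_snoc_top {m : ℕ} (a : Fin m → ℕ) (c : ℕ) :
    rmin (Fin.snoc a c) (m+1) = (∑ i, a i) + c := by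
  have huniv : ∑ i ∈ (Finset.univ : Finset (Fin (m+1))), Fin.snoc a c i
      = (∑ i, a i) + c := by
    rw [Fin.sum_univ_castSucc]
    simp [Fin.snoc_castSucc, Fin.snoc_last]
  apply le_antisymm
  · exact le_of_le_of_eq (rmin_le _ Finset.univ (by simp)) huniv
  · obtain ⟨S, hcard, heq⟩ := rmin_set_mem (Fin.snoc a c) (le_refl (m+1))
    have : S = Finset.univ := Finset.eq_univ_of_card S (by simp [hcard])
    rw [heq, this, huniv]

theorem stmt_9 (s : ℕ) (a b : Fin s → ℕ) (hma : Monotone a) (hmb : Monotone b)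
    (hsum : ∑ i, a i = ∑ i, b i)
    (hpartial : ∀ i : ℕ, i ≤ s →
      ∑ j ∈ Finset.univ.filter (fun j : Fin s => (j : ℕ) < i), a j ≤
        ∑ j ∈ Finset.univ.filter (fun j : Fin s => (j : ℕ) < i), b j)
    (hstr : ∃ i : ℕ, 1 ≤ i ∧ i < s ∧
      ∑ j ∈ Finset.univ.filter (fun j : Fin s => (j : ℕ) < i), a j <
        ∑ j ∈ Finset.univ.filter (fun j : Fin s => (j : ℕ) < i), b j)
    (c : ℕ) :
    (∀ i, 1 ≤ i → i ≤ s + 1 →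
        rmin (Fin.snoc a c) i ≤ rmin (Fin.snoc b c) i) ∧
      ∃ i, 1 ≤ i ∧ i < s + 1 ∧ rmin (Fin.snoc a c) i < rmin (Fin.snoc b c) i := by
  have hp : ∀ i : ℕ, i ≤ s → Psum a i ≤ Psum b i := hpartial
  constructor
  · intro i hi1 hi2
    rcases Nat.lt_or_ge i (s+1) with hlt | hge
    · have his : i ≤ s := by omega
      rw [rmin_snoc hma c hi1 his, rmin_snoc hmb c hi1 his]
      exact min_le_min (hp i his) (by have := hp (i-1) (by omega); omega)
    · have : i = s + 1 := by omega
      subst this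
      rw [rmin_snoc_top, rmin_snoc_top, hsum]
  · obtain ⟨i₀, hi1, hi2, hlt⟩ := hstr
    have hlt : Psum a i₀ < Psum b i₀ := hlt
    by_cases hcase : min (Psum a i₀) (Psum a (i₀-1) + c) < min (Psum b i₀) (Psum b (i₀-1) + c)
    · refine ⟨i₀, hi1, by omega, ?_⟩
      rw [rmin_snoc hma c hi1 (by omega), rmin_snoc hmb c hi1 (by omega)]
      exact hcase
    · -- equality case: deduce c ≤ b ⟨i₀-1⟩, then strict at i₀+1
      set pa := Psum a i₀ with hpa
      set pb := Psum b i₀ with hpb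
      set qb := Psum b (i₀-1) with hqb
      have h1 : min pb (qb + c) ≤ pa := le_trans (le_of_not_gt hcase) (min_le_left _ _)
      have h3 : min pb (qb + c) = qb + c := by
        rcases le_total pb (qb + c) with h | h
        · rw [min_eq_left h] at h1; omega
        · exact min_eq_right h
      have hqc : qb + c ≤ pa := h3 ▸ h1
      -- pb = qb + b ⟨i₀-1⟩
      have hstep : Psum b ((i₀-1)+1) = Psum b (i₀-1) + b ⟨i₀-1, by omega⟩ :=
        Psum_succ b (by omega)
      have hi0 : (i₀ - 1) + 1 = i₀ := by omega
      rw [hi0] at hstep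
      have hcb : c ≤ b ⟨i₀-1, by omega⟩ := by omega
      have hcb2 : c ≤ b ⟨i₀, by omega⟩ :=
        le_trans hcb (hmb (by simp [Fin.le_def]))
      -- strict at i₀ + 1
      refine ⟨i₀ + 1, by omega, by omega, ?_⟩
      rw [rmin_snoc hma c (by omega) (by omega), rmin_snoc hmb c (by omega) (by omega)]
      have hstepb : Psum b (i₀+1) = Psum b i₀ + b ⟨i₀, by omega⟩ := Psum_succ b (by omega)
      have hred : (i₀ + 1) - 1 = i₀ := by omega
      rw [hred]
      have hbmin : min (Psum b (i₀+1)) (Psum b i₀ + c) = Psum b i₀ + c := by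
        apply min_eq_right; omega
      rw [hbmin]
      calc min (Psum a (i₀+1)) (Psum a i₀ + c) ≤ Psum a i₀ + c := min_le_right _ _
        _ < Psum b i₀ + c := by omega
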